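/- If U ⊆ V are open subsets of a locally connected space X, V is Z-dense in X, and U is Z-dense in the subspace V, then U is Z-dense in X. -/
import Mathlib


open Set Topology

/-- An open subset `U` is Z-dense if it meets every non-empty open connected set
in a non-empty connected set. -/
def IsZDense {X : Type*} [TopologicalSpace X] (U : Set X) : Prop :=
  IsOpen U ∧ ∀ C : Set X, IsOpen C → IsConnected C → IsConnected (U ∩ C)

/-- A subset is negligible if its complement is Z-dense. -/
def IsNegligible {X : Type*} [TopologicalSpace X] (I : Set X) : Prop :=
  IsZDense Iᶜ

/-- If `U ⊆ V` are open, `V` is Z-dense in `X`, and `U` is Z-dense in the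
subspace `V`, then `U` is Z-dense in `X`. -/
theorem IsZDense.trans {X : Type*} [TopologicalSpace X] [LocallyConnectedSpace X]
    {U V : Set X} (hUopen : IsOpen U) (hVopen : IsOpen V) (hUV : U ⊆ V)
    (hV : IsZDense V) (hU : IsZDense ((Subtype.val ⁻¹' U : Set ↥V))) :
    IsZDense U := by
  refine ⟨hUopen, fun C hCopen hCconn => ?_⟩
  -- V ∩ C is connected, open
  have hVC : IsConnected (V ∩ C) := hV.2 C hCopen hCconn
  -- the corresponding subset of V
  have himg : (Subtype.val '' (Subtype.val ⁻¹' C : Set ↥V)) = V ∩ C := by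
    rw [Subtype.image_preimage_coe]
  have hpre_conn : IsConnected (Subtype.val ⁻¹' C : Set ↥V) := by
    constructor
    · rcases hVC.nonempty with ⟨x, hxV, hxC⟩
      exact ⟨⟨x, hxV⟩, hxC⟩
    · rw [← IsInducing.subtypeVal.isPreconnected_image, himg]
      exact hVC.isPreconnected
  have hpre_open : IsOpen (Subtype.val ⁻¹' C : Set ↥V) :=
    hCopen.preimage continuous_subtype_val
  have h := hU.2 _ hpre_open hpre_conn
  have himg2 : Subtype.val '' ((Subtype.val ⁻¹' U : Set ↥V) ∩ Subtype.val ⁻¹' C) = U ∩ C := by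
    ext x
    simp only [mem_image, mem_inter_iff, mem_preimage, Subtype.exists, exists_and_left,
      exists_prop, exists_eq_right_right]
    constructor
    · rintro ⟨h1, h2⟩; exact h1
    · intro h1; exact ⟨h1, hUV h1.1⟩
  rw [← himg2]
  exact h.image _ continuous_subtype_val.continuousOn
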